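/- For natural numbers m₁, m₂ with m₁ ≡ i-1 mod 6 and m₂ ≡ j-1 mod 6 (1 ≤ i,j ≤ 6), the double sum H₆(m₁,m₂) = Σ_{p₁=m₂}^{m₁+m₂} Σ_{p₂=0}^{m₂} C₆(p₁,p₂) equals the (i,j)-entry of the 6×6 matrix with rows (1,2,2,1,0,0), (2,3,2,0,-1,0), (2,2,0,-2,-2,0), (1,0,-2,-3,-2,0), (0,-1,-2,-2,-1,0), (0,0,0,0,0,0). -/
import Mathlib


/-- `C₆(p₁,p₂)`: the 6-periodic function of `p₁ - p₂` taking values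
`1, 1, 0, -1, -1, 0` for `p₁ - p₂ ≡ 0, 1, 2, 3, 4, 5 mod 6`. -/
def C6 (p₁ p₂ : ℕ) : ℤ := ![1, 1, 0, -1, -1, 0] ⟨(p₁ - p₂) % 6, by omega⟩

/-- The matrix `M₆`. -/
def M6 : Fin 6 → Fin 6 → ℤ :=
  ![![1, 2, 2, 1, 0, 0],
    ![2, 3, 2, 0, -1, 0],
    ![2, 2, 0, -2, -2, 0],
    ![1, 0, -2, -3, -2, 0],
    ![0, -1, -2, -2, -1, 0],
    ![0, 0, 0, 0, 0, 0]]

def cAux (n : ℕ) : ℤ := C6 n 0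

lemma C6_eq (p₁ p₂ : ℕ) : C6 p₁ p₂ = cAux (p₁ - p₂) := rfl

lemma cAux_mod (n : ℕ) : cAux n = cAux (n % 6) := by
  unfold cAux C6
  exact congrArg _ (Fin.ext (by simp))

lemma cAux_shift (n : ℕ) : cAux (n + 6) = cAux n := by
  unfold cAux C6
  exact congrArg _ (Fin.ext (by simp))

lemma csum (b : ℕ) : ∑ k ∈ Finset.range 6, cAux (b + k) = 0 := by
  have h : ∀ k, cAux (b + k) = cAux (b % 6 + k % 6) := fun k => by
    rw [cAux_mod, cAux_mod (b % 6 + k % 6)]; congr 1; omega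
  simp only [h]
  have hb : b % 6 < 6 := by omega
  set r := b % 6 with hr
  clear_value r
  interval_cases r <;> decide

lemma csum' (d : ℕ) (hd : 5 ≤ d) : ∑ k ∈ Finset.range 6, cAux (d - k) = 0 := by
  have e : ∑ k ∈ Finset.range 6, cAux (d - k)
      = ∑ k ∈ Finset.range 6, cAux ((d - 5) % 6 + (5 - k) % 6) := by
    refine Finset.sum_congr rfl fun k hk => ?_
    rw [Finset.mem_range] at hk
    rw [cAux_mod, show (d - k) % 6 = ((d - 5) % 6 + (5 - k) % 6) % 6 from by omega, ← cAux_mod]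
  rw [e]
  have hb : (d - 5) % 6 < 6 := by omega
  set r := (d - 5) % 6 with hr
  clear_value r
  interval_cases r <;> decide

lemma blockA (a p₂ : ℕ) (h : p₂ ≤ a) : ∑ p₁ ∈ Finset.Ioc a (a + 6), C6 p₁ p₂ = 0 := by
  rw [← Finset.Icc_add_one_left_eq_Ioc, ← Finset.Ico_add_one_right_eq_Icc, Finset.sum_Ico_eq_sum_range,
    show a + 6 + 1 - (a + 1) = 6 from by omega]
  have h1 : ∀ i, C6 (a + 1 + i) p₂ = cAux ((a + 1 - p₂) + i) := fun i => by
    rw [C6_eq]; congr 1; omega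
  simp only [h1]
  exact csum _

lemma blockB (P M : ℕ) (h : M ≤ P) : ∑ p₂ ∈ Finset.Ioc M (M + 6), C6 (P + 6) p₂ = 0 := by
  rw [← Finset.Icc_add_one_left_eq_Ioc, ← Finset.Ico_add_one_right_eq_Icc, Finset.sum_Ico_eq_sum_range,
    show M + 6 + 1 - (M + 1) = 6 from by omega]
  have e : ∑ i ∈ Finset.range 6, C6 (P + 6) (M + 1 + i)
      = ∑ i ∈ Finset.range 6, cAux ((P + 5 - M) - i) := by
    refine Finset.sum_congr rfl fun i hi => ?_
    rw [Finset.mem_range] at hi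
    rw [C6_eq]; congr 1; omega
  rw [e]
  exact csum' _ (by omega)

lemma c6_shift6 (P p₂ : ℕ) (h : p₂ ≤ P) : C6 (P + 6) p₂ = C6 P p₂ := by
  rw [C6_eq, C6_eq, show P + 6 - p₂ = (P - p₂) + 6 from by omega, cAux_shift]

def H (m₁ m₂ : ℕ) : ℤ := ∑ p₁ ∈ Finset.Icc m₂ (m₁ + m₂), ∑ p₂ ∈ Finset.Icc 0 m₂, C6 p₁ p₂

lemma HA (m₁ m₂ : ℕ) : H (m₁ + 6) m₂ = H m₁ m₂ := by
  unfold H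
  have hsplit : Finset.Icc m₂ (m₁ + 6 + m₂) =
      Finset.Icc m₂ (m₁ + m₂) ∪ Finset.Ioc (m₁ + m₂) (m₁ + m₂ + 6) := by
    ext x
    simp only [Finset.mem_Icc, Finset.mem_union, Finset.mem_Ioc]
    omega
  rw [hsplit, Finset.sum_union (by
    rw [Finset.disjoint_left]
    intro x hx hx'
    simp only [Finset.mem_Icc] at hx
    simp only [Finset.mem_Ioc] at hx'
    omega)]
  have h0 : ∑ p₁ ∈ Finset.Ioc (m₁ + m₂) (m₁ + m₂ + 6), ∑ p₂ ∈ Finset.Icc 0 m₂, C6 p₁ p₂ = 0 := by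
    rw [Finset.sum_comm]
    refine Finset.sum_eq_zero fun p₂ hp₂ => ?_
    simp only [Finset.mem_Icc] at hp₂
    exact blockA _ _ (by omega)
  rw [h0, add_zero]

lemma HB (m₁ m₂ : ℕ) : H m₁ (m₂ + 6) = H m₁ m₂ := by
  unfold H
  rw [← Finset.Ico_add_one_right_eq_Icc, Finset.sum_Ico_eq_sum_range,
    ← Finset.Ico_add_one_right_eq_Icc (a := m₂),
    Finset.sum_Ico_eq_sum_range (f := fun p₁ => ∑ p₂ ∈ Finset.Icc 0 m₂, C6 p₁ p₂),
    show m₁ + (m₂ + 6) + 1 - (m₂ + 6) = m₁ + 1 from by omega,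
    show m₁ + m₂ + 1 - m₂ = m₁ + 1 from by omega]
  refine Finset.sum_congr rfl fun i _ => ?_
  have hsplit : Finset.Icc 0 (m₂ + 6) = Finset.Icc 0 m₂ ∪ Finset.Ioc m₂ (m₂ + 6) := by
    ext x
    simp only [Finset.mem_Icc, Finset.mem_union, Finset.mem_Ioc]
    omega
  rw [hsplit, Finset.sum_union (by
    rw [Finset.disjoint_left]
    intro x hx hx'
    simp only [Finset.mem_Icc] at hx
    simp only [Finset.mem_Ioc] at hx'
    omega)]
  have h1 : ∑ p₂ ∈ Finset.Icc 0 m₂, C6 (m₂ + 6 + i) p₂ = ∑ p₂ ∈ Finset.Icc 0 m₂, C6 (m₂ + i) p₂ :=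
    Finset.sum_congr rfl fun p₂ hp => by
      rw [show m₂ + 6 + i = (m₂ + i) + 6 from by omega,
        c6_shift6 _ _ (by simp only [Finset.mem_Icc] at hp; omega)]
  have h2 : ∑ p₂ ∈ Finset.Ioc m₂ (m₂ + 6), C6 (m₂ + 6 + i) p₂ = 0 := by
    rw [show m₂ + 6 + i = (m₂ + i) + 6 from by omega]
    exact blockB _ _ (by omega)
  rw [h1, h2, add_zero]

lemma Hmod (m₁ m₂ : ℕ) : H m₁ m₂ = H (m₁ % 6) (m₂ % 6) := by
  suffices h : ∀ n m₁ m₂, m₁ + m₂ = n → H m₁ m₂ = H (m₁ % 6) (m₂ % 6) from h _ m₁ m₂ rfl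
  intro n
  induction n using Nat.strong_induction_on with
  | _ n ih =>
    intro m₁ m₂ hn
    rcases Nat.lt_or_ge m₁ 6 with h1 | h1
    · rcases Nat.lt_or_ge m₂ 6 with h2 | h2
      · rw [Nat.mod_eq_of_lt h1, Nat.mod_eq_of_lt h2]
      · obtain ⟨k, rfl⟩ : ∃ k, m₂ = k + 6 := ⟨m₂ - 6, by omega⟩
        rw [HB, ih (m₁ + k) (by omega) m₁ k rfl, show (k + 6) % 6 = k % 6 from by omega]
    · obtain ⟨k, rfl⟩ : ∃ k, m₁ = k + 6 := ⟨m₁ - 6, by omega⟩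
      rw [HA, ih (k + m₂) (by omega) k m₂ rfl, show (k + 6) % 6 = k % 6 from by omega]


lemma Hbase : ∀ a b : Fin 6, H a b = M6 a b := by decide


/-- `H₆(m₁,m₂) = Σ_{p₁=m₂}^{m₁+m₂} Σ_{p₂=0}^{m₂} C₆(p₁,p₂)` equals
the entry of `M₆` indexed by the residues of `m₁` and `m₂` mod 6. -/
theorem stmt12 (m₁ m₂ : ℕ) :
    (∑ p₁ ∈ Finset.Icc m₂ (m₁ + m₂), ∑ p₂ ∈ Finset.Icc 0 m₂, C6 p₁ p₂) =
      M6 ⟨m₁ % 6, by omega⟩ ⟨m₂ % 6, by omega⟩ := by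
  show H m₁ m₂ = _
  rw [Hmod]
  exact Hbase ⟨m₁ % 6, by omega⟩ ⟨m₂ % 6, by omega⟩
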